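/- Let f(x;μ) be a natural exponential family in mean parametrization with variance function V_f(μ) = ∫(x-μ)² f(x;μ)dν(x), and suppose V_f is a polynomial of degree at most 2. Define Pₖ(x;μ) = V_f(μ)ᵏ · f⁽ᵏ⁾(x;μ)/f(x;μ). Then for k ≠ j, ∫ Pₖ(x;μ) Pⱼ(x;μ) f(x;μ) dν(x) = 0, i.e., the {Pₖ} form an orthogonal system with respect to f(·;μ). -/

import Mathlib

open MeasureTheory Real Filter Set

namespace MorrisOrthAux

lemma pow_le_factorial_mul_exp (t : ℝ) (ht : 0 ≤ t) (n : ℕ) :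
    t ^ n ≤ n.factorial * Real.exp t := by
  have h := Real.sum_le_exp_of_nonneg ht (n + 1)
  have h2 : t ^ n / (n.factorial : ℝ) ≤ ∑ i ∈ Finset.range (n + 1), t ^ i / i.factorial :=
    Finset.single_le_sum (f := fun i => t ^ i / (i.factorial : ℝ))
      (fun i _ => by positivity) (Finset.self_mem_range_succ n)
  have h3 : t ^ n / (n.factorial : ℝ) ≤ Real.exp t := le_trans h2 h
  have hfac : (0:ℝ) < n.factorial := by positivity
  calc t ^ n = (n.factorial : ℝ) * (t ^ n / n.factorial) := by field_simp
    _ ≤ n.factorial * Real.exp t := by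
        exact mul_le_mul_of_nonneg_left h3 (le_of_lt hfac)

lemma exp_between {p q r x : ℝ} (hp : p ≤ r) (hq : r ≤ q) :
    Real.exp (r * x) ≤ Real.exp (p * x) + Real.exp (q * x) := by
  rcases le_total x 0 with hx | hx
  · have : r * x ≤ p * x := mul_le_mul_of_nonpos_right hp hx
    have h1 : Real.exp (r * x) ≤ Real.exp (p * x) := Real.exp_le_exp.mpr this
    linarith [Real.exp_pos (q * x)]
  · have : r * x ≤ q * x := mul_le_mul_of_nonneg_right hq hx
    have h1 : Real.exp (r * x) ≤ Real.exp (q * x) := Real.exp_le_exp.mpr this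
    linarith [Real.exp_pos (p * x)]

/-- Key domination bound: `|x|^n e^{wx} ≤ (n!/δ^n) * 2 (e^{u₀ x} + e^{v₀ x})`
whenever `u₀ ≤ w - δ` and `w + δ ≤ v₀`. -/
lemma abs_pow_mul_exp_le {u₀ v₀ w δ : ℝ} (hδ : 0 < δ) (h1 : u₀ ≤ w - δ) (h2 : w + δ ≤ v₀)
    (n : ℕ) (x : ℝ) :
    |x| ^ n * Real.exp (w * x) ≤
      (n.factorial / δ ^ n) * (2 * (Real.exp (u₀ * x) + Real.exp (v₀ * x))) := by
  have hpow : |x| ^ n ≤ n.factorial / δ ^ n * Real.exp (δ * |x|) := by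
    have h := pow_le_factorial_mul_exp (δ * |x|) (by positivity) n
    have hδn : (0:ℝ) < δ ^ n := by positivity
    rw [mul_pow] at h
    rw [div_mul_eq_mul_div, le_div_iff₀ hδn]
    calc |x| ^ n * δ ^ n = δ ^ n * |x| ^ n := by ring
      _ ≤ n.factorial * Real.exp (δ * |x|) := h
  have hkey : Real.exp (δ * |x|) * Real.exp (w * x) ≤
      Real.exp (u₀ * x) + Real.exp (v₀ * x) + (Real.exp (u₀ * x) + Real.exp (v₀ * x)) := by
    rw [← Real.exp_add]
    rcases le_total x 0 with hx | hx
    · have habs : |x| = -x := abs_of_nonpos hx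
      have : δ * |x| + w * x = (w - δ) * x := by rw [habs]; ring
      rw [this]
      have := exp_between (x := x) (r := w - δ) (p := u₀) (q := v₀) h1 (by linarith)
      linarith [Real.exp_pos (u₀ * x), Real.exp_pos (v₀ * x)]
    · have habs : |x| = x := abs_of_nonneg hx
      have : δ * |x| + w * x = (w + δ) * x := by rw [habs]; ring
      rw [this]
      have := exp_between (x := x) (r := w + δ) (p := u₀) (q := v₀) (by linarith) h2
      linarith [Real.exp_pos (u₀ * x), Real.exp_pos (v₀ * x)]
  have hfac : (0:ℝ) ≤ n.factorial / δ ^ n := by positivity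
  calc |x| ^ n * Real.exp (w * x)
      ≤ (n.factorial / δ ^ n * Real.exp (δ * |x|)) * Real.exp (w * x) := by
        apply mul_le_mul_of_nonneg_right hpow (le_of_lt (Real.exp_pos _))
    _ = (n.factorial / δ ^ n) * (Real.exp (δ * |x|) * Real.exp (w * x)) := by ring
    _ ≤ (n.factorial / δ ^ n) * (2 * (Real.exp (u₀ * x) + Real.exp (v₀ * x))) := by
        apply mul_le_mul_of_nonneg_left _ hfac
        linarith

lemma iteratedDerivWithin_of_isOpen' {s : Set ℝ} {g : ℝ → ℝ} {x : ℝ} (n : ℕ)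
    (hs : IsOpen s) (hx : x ∈ s) :
    iteratedDerivWithin n g s x = iteratedDeriv n g x := by
  rw [iteratedDerivWithin_eq_iteratedFDerivWithin, iteratedDeriv_eq_iteratedFDeriv,
    iteratedFDerivWithin_of_isOpen n hs hx]

lemma eqOn_iteratedDeriv {s : Set ℝ} {g₁ g₂ : ℝ → ℝ} (hs : IsOpen s)
    (h : Set.EqOn g₁ g₂ s) (n : ℕ) :
    Set.EqOn (iteratedDeriv n g₁) (iteratedDeriv n g₂) s := by
  induction n with
  | zero => simpa using h
  | succ n ih =>
      intro x hx
      rw [iteratedDeriv_succ, iteratedDeriv_succ]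
      exact Filter.EventuallyEq.deriv_eq (Filter.eventuallyEq_of_mem (hs.mem_nhds hx) ih)

lemma iteratedDeriv_polynomial (p : Polynomial ℝ) (k : ℕ) :
    iteratedDeriv k (fun x => p.eval x) = fun x => (Polynomial.derivative^[k] p).eval x := by
  induction k generalizing p with
  | zero => simp
  | succ n ih =>
      rw [iteratedDeriv_succ']
      have : deriv (fun x => p.eval x) = fun x => (Polynomial.derivative p).eval x := by
        funext y; exact Polynomial.deriv p
      rw [this, ih, Function.iterate_succ]
      rfl

/-- The coefficient system for iterated `m`-derivatives of `exp (θ m * x - κ m)`: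
`f⁽ᵏ⁾(x,m) = (∑_{i ≤ k} mc θ κ k i m * x^i) * f(x,m)`. -/
noncomputable def mc (θ κ : ℝ → ℝ) : ℕ → ℕ → ℝ → ℝ
  | 0, 0, _ => 1
  | 0, _ + 1, _ => 0
  | k + 1, 0, m => deriv (mc θ κ k 0) m - deriv κ m * mc θ κ k 0 m
  | k + 1, i + 1, m =>
      deriv (mc θ κ k (i + 1)) m + deriv θ m * mc θ κ k i m - deriv κ m * mc θ κ k (i + 1) m

lemma mc_zero_of_lt (θ κ : ℝ → ℝ) : ∀ k i, k < i → mc θ κ k i = fun _ => 0 := by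
  intro k
  induction k with
  | zero =>
      intro i hi
      match i, hi with
      | (i + 1), _ => rfl
  | succ k ih =>
      intro i hi
      match i, hi with
      | (i + 1), hi =>
          have h1 : mc θ κ k (i + 1) = fun _ => 0 := ih _ (by omega)
          have h2 : mc θ κ k i = fun _ => 0 := ih _ (by omega)
          funext m
          show deriv (mc θ κ k (i + 1)) m + deriv θ m * mc θ κ k i m
              - deriv κ m * mc θ κ k (i + 1) m = 0
          rw [h1, h2]
          simp

/-- The finite-sum recombination used for the derivative recursions. -/
lemma sum_step (d c e M : ℕ → ℝ) (θ' κ' : ℝ) (k : ℕ)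
    (hck : c (k + 1) = 0) (hdk : d (k + 1) = 0)
    (he0 : e 0 = d 0 - κ' * c 0)
    (heS : ∀ i, e (i + 1) = d (i + 1) + θ' * c i - κ' * c (i + 1)) :
    ∑ i ∈ Finset.range (k + 2), e i * M i =
      (∑ i ∈ Finset.range (k + 1), d i * M i)
        + θ' * (∑ i ∈ Finset.range (k + 1), c i * M (i + 1))
        - κ' * (∑ i ∈ Finset.range (k + 1), c i * M i) := by
  rw [Finset.sum_range_succ' (fun i => e i * M i) (k + 1)]
  simp only [heS, he0]
  have hd : ∑ i ∈ Finset.range (k + 1), d (i + 1) * M (i + 1) + d 0 * M 0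
      = ∑ i ∈ Finset.range (k + 1), d i * M i := by
    rw [← Finset.sum_range_succ' (fun i => d i * M i) (k + 1),
      Finset.sum_range_succ (fun i => d i * M i) (k + 1), hdk]
    ring
  have hc : ∑ i ∈ Finset.range (k + 1), c (i + 1) * M (i + 1) + c 0 * M 0
      = ∑ i ∈ Finset.range (k + 1), c i * M i := by
    rw [← Finset.sum_range_succ' (fun i => c i * M i) (k + 1),
      Finset.sum_range_succ (fun i => c i * M i) (k + 1), hck]
    ring
  calc ∑ i ∈ Finset.range (k + 1),
        (d (i + 1) + θ' * c i - κ' * c (i + 1)) * M (i + 1) + (d 0 - κ' * c 0) * M 0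
      = (∑ i ∈ Finset.range (k + 1), d (i + 1) * M (i + 1) + d 0 * M 0)
        + θ' * (∑ i ∈ Finset.range (k + 1), c i * M (i + 1))
        - κ' * (∑ i ∈ Finset.range (k + 1), c (i + 1) * M (i + 1) + c 0 * M 0) := by
        have hcong : ∀ i ∈ Finset.range (k + 1),
            (d (i + 1) + θ' * c i - κ' * c (i + 1)) * M (i + 1)
              = (d (i + 1) * M (i + 1) + θ' * (c i * M (i + 1)))
                - κ' * (c (i + 1) * M (i + 1)) := fun i _ => by ring
        rw [Finset.sum_congr rfl hcong, Finset.sum_sub_distrib, Finset.sum_add_distrib,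
          ← Finset.mul_sum, ← Finset.mul_sum]
        ring
    _ = _ := by rw [hd, hc]

lemma mc_succ_zero (θ κ : ℝ → ℝ) (k : ℕ) (m : ℝ) :
    mc θ κ (k + 1) 0 m = deriv (mc θ κ k 0) m - deriv κ m * mc θ κ k 0 m := rfl

lemma mc_succ_succ (θ κ : ℝ → ℝ) (k i : ℕ) (m : ℝ) :
    mc θ κ (k + 1) (i + 1) m =
      deriv (mc θ κ k (i + 1)) m + deriv θ m * mc θ κ k i m
        - deriv κ m * mc θ κ k (i + 1) m := rfl

lemma mc_zero_zero (θ κ : ℝ → ℝ) (m : ℝ) : mc θ κ 0 0 m = 1 := rfl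

end MorrisOrthAux

open MorrisOrthAux

/-- Morris's orthogonality: for a natural exponential family in mean parametrization
with variance function a polynomial of degree at most 2, the functions
`Pₖ(x;μ) = V(μ)ᵏ f⁽ᵏ⁾(x;μ)/f(x;μ)` form an orthogonal system w.r.t. `f(·;μ)`. -/
theorem quadratic_variance_derivative_polynomials_orthogonal
    (ν : Measure ℝ) (θ κ : ℝ → ℝ) (f : ℝ → ℝ → ℝ)
    (M : Set ℝ) (hM : IsOpen M)
    (hf : ∀ x m, f x m = Real.exp (θ m * x - κ m))
    (hθ : ContDiffOn ℝ ⊤ θ M) (hκ : ContDiffOn ℝ ⊤ κ M)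
    (hnorm : ∀ m ∈ M, ∫ x, f x m ∂ν = 1)
    (hmean : ∀ m ∈ M, ∫ x, x * f x m ∂ν = m)
    (V : ℝ → ℝ)
    (hV : ∀ m ∈ M, V m = ∫ x, (x - m)^2 * f x m ∂ν)
    (hquad : ∃ a b c : ℝ, ∀ m ∈ M, V m = a * m^2 + b * m + c) :
    ∀ μ ∈ M, ∀ k j : ℕ, k ≠ j →
      ∫ x, ((V μ)^k * iteratedDerivWithin k (fun m => f x m) M μ / f x μ)
          * ((V μ)^j * iteratedDerivWithin j (fun m => f x m) M μ / f x μ)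
          * f x μ ∂ν = 0 := by
  intro μ hμ k j hkj
  -- ## Basic facts
  have fpos : ∀ x m, 0 < f x m := fun x m => by rw [hf]; exact Real.exp_pos _
  have fcont' : ∀ m : ℝ, Continuous fun x => f x m := by
    intro m
    have h1 : (fun x => f x m) = fun x => Real.exp (θ m * x - κ m) := funext fun x => hf x m
    rw [h1]; fun_prop
  have fcont : ∀ (n : ℕ) (m : ℝ), Continuous fun x => x ^ n * f x m :=
    fun n m => (continuous_pow n).mul (fcont' m)
  have fint : ∀ m ∈ M, Integrable (fun x => f x m) ν := by
    intro m hm; by_contra h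
    have h1 := hnorm m hm; rw [integral_undef h] at h1; norm_num at h1
  have expint : ∀ m ∈ M, Integrable (fun x => Real.exp (θ m * x)) ν := by
    intro m hm
    have h1 : (fun x => Real.exp (θ m * x)) = fun x => Real.exp (κ m) * f x m := by
      funext x; rw [hf, ← Real.exp_add]; ring_nf
    rw [h1]; exact (fint m hm).const_mul _
  have θd : ∀ m ∈ M, DifferentiableAt ℝ θ m :=
    fun m hm => (hθ.differentiableOn (by simp)).differentiableAt (hM.mem_nhds hm)
  have κd : ∀ m ∈ M, DifferentiableAt ℝ κ m :=
    fun m hm => (hκ.differentiableOn (by simp)).differentiableAt (hM.mem_nhds hm)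
  have hfderiv : ∀ (x : ℝ), ∀ m ∈ M,
      HasDerivAt (fun m' => f x m') ((deriv θ m * x - deriv κ m) * f x m) m := by
    intro x m hm
    have h1 : HasDerivAt (fun m'' => θ m'' * x - κ m'') (deriv θ m * x - deriv κ m) m :=
      ((θd m hm).hasDerivAt.mul_const x).sub (κd m hm).hasDerivAt
    have h2 := h1.exp
    have hfx : (fun m'' => f x m'') = fun m'' => Real.exp (θ m'' * x - κ m'') :=
      funext fun m'' => hf x m''
    rw [hfx, hf]
    convert h2 using 1; ring
  have θinj : ∀ m₁ ∈ M, ∀ m₂ ∈ M, θ m₁ = θ m₂ → m₁ = m₂ := by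
    intro m₁ h₁ m₂ h₂ he
    have hfe : ∀ x, f x m₂ = Real.exp (κ m₁ - κ m₂) * f x m₁ := by
      intro x; rw [hf, hf, ← Real.exp_add, he]; ring_nf
    have h1 : (1:ℝ) = Real.exp (κ m₁ - κ m₂) * 1 := by
      calc (1:ℝ) = ∫ x, f x m₂ ∂ν := (hnorm m₂ h₂).symm
        _ = ∫ x, Real.exp (κ m₁ - κ m₂) * f x m₁ ∂ν := by simp only [hfe]
        _ = Real.exp (κ m₁ - κ m₂) * ∫ x, f x m₁ ∂ν := integral_const_mul _ _
        _ = Real.exp (κ m₁ - κ m₂) * 1 := by rw [hnorm m₁ h₁]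
    have hκe : κ m₁ = κ m₂ := by
      have h2 : Real.exp (κ m₁ - κ m₂) = 1 := by linarith
      have h3 := (Real.exp_eq_one_iff _).mp h2; linarith
    have hff : ∀ x, x * f x m₂ = x * f x m₁ := fun x => by rw [hf, hf, he, hκe]
    calc m₁ = ∫ x, x * f x m₁ ∂ν := (hmean m₁ h₁).symm
      _ = ∫ x, x * f x m₂ ∂ν := by simp only [hff]
      _ = m₂ := hmean m₂ h₂
  -- ## Interval setup
  obtain ⟨ε, εpos, hball⟩ := Metric.isOpen_iff.mp hM μ hμ
  set a₀ : ℝ := μ - ε/2 with ha₀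
  set b₀ : ℝ := μ + ε/2 with hb₀
  set a₁ : ℝ := μ - ε/4 with ha₁
  set b₁ : ℝ := μ + ε/4 with hb₁
  have hsub : Icc a₀ b₀ ⊆ M := by
    intro y hy
    apply hball
    rw [Metric.mem_ball, Real.dist_eq]
    have h1 : |y - μ| ≤ ε/2 := abs_le.mpr ⟨by simp only [ha₀] at hy; linarith [hy.1],
      by simp only [hb₀] at hy; linarith [hy.2]⟩
    linarith
  have hIccsub : Icc a₁ b₁ ⊆ Icc a₀ b₀ := Icc_subset_Icc (by rw [ha₀, ha₁]; linarith)
    (by rw [hb₀, hb₁]; linarith)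
  have hIccM : Icc a₁ b₁ ⊆ M := fun y hy => hsub (hIccsub hy)
  have hIopen : IsOpen (Ioo a₁ b₁) := isOpen_Ioo
  have hμI : μ ∈ Ioo a₁ b₁ := ⟨by rw [ha₁]; linarith, by rw [hb₁]; linarith⟩
  have hIsub : Ioo a₁ b₁ ⊆ Icc a₁ b₁ := Ioo_subset_Icc_self
  have hIM : Ioo a₁ b₁ ⊆ M := fun y hy => hIccM (hIsub hy)
  have hμIcc : μ ∈ Icc a₁ b₁ := hIsub hμI
  have ha₀M : a₀ ∈ Icc a₀ b₀ := ⟨le_refl _, by rw [ha₀, hb₀]; linarith⟩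
  have hb₀M : b₀ ∈ Icc a₀ b₀ := ⟨by rw [ha₀, hb₀]; linarith, le_refl _⟩
  have ha₁M : a₁ ∈ Icc a₀ b₀ := ⟨by rw [ha₀, ha₁]; linarith, by rw [ha₁, hb₀]; linarith⟩
  have hb₁M : b₁ ∈ Icc a₀ b₀ := ⟨by rw [ha₀, hb₁]; linarith, by rw [hb₁, hb₀]; linarith⟩
  -- ## Exponent box
  have hK : ∃ u₀ u v v₀ : ℝ, u₀ < u ∧ v < v₀ ∧ (∀ m' ∈ Icc a₁ b₁, θ m' ∈ Icc u v) ∧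
      Integrable (fun x => Real.exp (u₀ * x)) ν ∧ Integrable (fun x => Real.exp (v₀ * x)) ν := by
    have hinj : InjOn θ (Icc a₀ b₀) := fun x hx y hy hxy => θinj x (hsub hx) y (hsub hy) hxy
    have hcont : ContinuousOn θ (Icc a₀ b₀) := hθ.continuousOn.mono hsub
    have hab : a₀ ≤ b₀ := by rw [ha₀, hb₀]; linarith
    rcases ContinuousOn.strictMonoOn_of_injOn_Icc' hab hcont hinj with hmono | hanti
    · refine ⟨θ a₀, θ a₁, θ b₁, θ b₀, ?_, ?_, ?_, expint a₀ (hsub ha₀M), expint b₀ (hsub hb₀M)⟩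
      · exact hmono ha₀M ha₁M (by rw [ha₀, ha₁]; linarith)
      · exact hmono hb₁M hb₀M (by rw [hb₁, hb₀]; linarith)
      · intro m' hm'
        exact ⟨hmono.monotoneOn ha₁M (hIccsub hm') hm'.1,
          hmono.monotoneOn (hIccsub hm') hb₁M hm'.2⟩
    · refine ⟨θ b₀, θ b₁, θ a₁, θ a₀, ?_, ?_, ?_, expint b₀ (hsub hb₀M), expint a₀ (hsub ha₀M)⟩
      · exact hanti hb₁M hb₀M (by rw [hb₁, hb₀]; linarith)
      · exact hanti ha₀M ha₁M (by rw [ha₀, ha₁]; linarith)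
      · intro m' hm'
        exact ⟨hanti.antitoneOn (hIccsub hm') hb₁M hm'.2,
          hanti.antitoneOn ha₁M (hIccsub hm') hm'.1⟩
  obtain ⟨u₀, u, v, v₀, huu, hvv, hbox, hiu, hiv⟩ := hK
  -- ## Dominating functions
  have J : ∀ n : ℕ, ∃ g : ℝ → ℝ, Integrable g ν ∧ (∀ x, 0 ≤ g x) ∧
      ∀ m' ∈ Icc a₁ b₁, ∀ x, |x| ^ n * Real.exp (θ m' * x) ≤ g x := by
    intro n
    set δ : ℝ := min (u - u₀) (v₀ - v) with hδdef
    have hδ : 0 < δ := lt_min (by linarith) (by linarith)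
    refine ⟨fun x => (n.factorial / δ ^ n) *
      (2 * (Real.exp (u₀ * x) + Real.exp (v₀ * x))), ?_, ?_, ?_⟩
    · exact ((hiu.add hiv).const_mul 2).const_mul _
    · intro x; positivity
    · intro m' hm' x
      have hw := hbox m' hm'
      have hd1 : δ ≤ u - u₀ := min_le_left _ _
      have hd2 : δ ≤ v₀ - v := min_le_right _ _
      exact abs_pow_mul_exp_le hδ (by have := hw.1; linarith) (by have := hw.2; linarith) n x
  -- ## Moment integrability
  have Mint : ∀ (n : ℕ), ∀ m' ∈ Icc a₁ b₁, Integrable (fun x => x ^ n * f x m') ν := by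
    intro n m' hm'
    obtain ⟨g, hgint, hgpos, hgb⟩ := J n
    apply Integrable.mono (hgint.const_mul (Real.exp (-κ m'))) (fcont n m').aestronglyMeasurable
    refine ae_of_all _ fun x => ?_
    rw [Real.norm_eq_abs, Real.norm_eq_abs]
    have habs : |x ^ n * f x m'| = Real.exp (-κ m') * (|x| ^ n * Real.exp (θ m' * x)) := by
      rw [hf, abs_mul, abs_pow, abs_of_pos (Real.exp_pos _),
        show θ m' * x - κ m' = -κ m' + θ m' * x by ring, Real.exp_add]
      ring
    rw [habs]
    have h2 : Real.exp (-κ m') * (|x| ^ n * Real.exp (θ m' * x)) ≤ Real.exp (-κ m') * g x :=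
      mul_le_mul_of_nonneg_left (hgb m' hm' x) (Real.exp_pos _).le
    calc Real.exp (-κ m') * (|x| ^ n * Real.exp (θ m' * x)) ≤ Real.exp (-κ m') * g x := h2
      _ ≤ |Real.exp (-κ m') * g x| := le_abs_self _
  -- ## Uniform bounds for derivatives of θ, κ on the compact interval
  have hθ'c : ContinuousOn (deriv θ) M := (ContDiffOn.continuousOn (n := (⊤:WithTop ℕ∞)) (hθ.deriv_of_isOpen hM le_top))
  have hκ'c : ContinuousOn (deriv κ) M := (ContDiffOn.continuousOn (n := (⊤:WithTop ℕ∞)) (hκ.deriv_of_isOpen hM le_top))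
  obtain ⟨C, hC⟩ : ∃ C : ℝ, ∀ m' ∈ Icc a₁ b₁,
      |deriv θ m'| ≤ C ∧ |deriv κ m'| ≤ C ∧ Real.exp (-κ m') ≤ C := by
    obtain ⟨C, hC⟩ := (isCompact_Icc : IsCompact (Icc a₁ b₁)).exists_bound_of_continuousOn
      (f := fun m' => (|deriv θ m'| + |deriv κ m'|) + Real.exp (-κ m'))
      (((hθ'c.mono hIccM).abs.add (hκ'c.mono hIccM).abs).add
        (Real.continuous_exp.comp_continuousOn (hκ.continuousOn.mono hIccM).neg))
    refine ⟨C, fun m' hm' => ?_⟩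
    have h1 := hC m' hm'
    rw [Real.norm_eq_abs] at h1
    have h2 : (|deriv θ m'| + |deriv κ m'|) + Real.exp (-κ m') ≤ C :=
      le_trans (le_abs_self _) h1
    have e1 := abs_nonneg (deriv θ m')
    have e2 := abs_nonneg (deriv κ m')
    have e3 := (Real.exp_pos (-κ m')).le
    exact ⟨by linarith, by linarith, by linarith⟩
  have hCpos : 0 < C := lt_of_lt_of_le (Real.exp_pos _) (hC μ hμIcc).2.2
  -- ## Differentiation under the integral sign
  have Dmom : ∀ (n : ℕ), ∀ m ∈ Ioo a₁ b₁,
      HasDerivAt (fun m' => ∫ x, x ^ n * f x m' ∂ν)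
        (deriv θ m * (∫ x, x ^ (n+1) * f x m ∂ν) - deriv κ m * (∫ x, x ^ n * f x m ∂ν)) m := by
    intro n m hm
    obtain ⟨ε', ε'pos, hball'⟩ := Metric.isOpen_iff.mp hIopen m hm
    obtain ⟨g1, hg1int, hg1pos, hg1b⟩ := J (n+1)
    obtain ⟨g0, hg0int, hg0pos, hg0b⟩ := J n
    have key := hasDerivAt_integral_of_dominated_loc_of_deriv_le
      (F := fun m' x => x ^ n * f x m')
      (F' := fun m' x => x ^ n * (deriv θ m' * x - deriv κ m') * f x m')
      (bound := fun x => C * (C * g1 x + C * g0 x)) (x₀ := m) (Metric.ball_mem_nhds m ε'pos)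
      (Filter.Eventually.of_forall fun m' => (fcont n m').aestronglyMeasurable)
      (Mint n m (hIsub hm))
      (by
        apply Continuous.aestronglyMeasurable
        exact ((continuous_pow n).mul
          ((continuous_const.mul continuous_id).sub continuous_const)).mul (fcont' m))
      (by
        refine ae_of_all _ fun x => fun m' hm'b => ?_
        have hm'Icc : m' ∈ Icc a₁ b₁ := hIsub (hball' hm'b)
        obtain ⟨hc1, hc2, hc3⟩ := hC m' hm'Icc
        rw [Real.norm_eq_abs]
        have h1 : |x ^ n * (deriv θ m' * x - deriv κ m') * f x m'|
            = (|x| ^ n * |deriv θ m' * x - deriv κ m'|) *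
              (Real.exp (-κ m') * Real.exp (θ m' * x)) := by
          rw [hf, abs_mul, abs_mul, abs_pow, abs_of_pos (Real.exp_pos _),
            show θ m' * x - κ m' = -κ m' + θ m' * x by ring, Real.exp_add]
        rw [h1]
        have h2 : |deriv θ m' * x - deriv κ m'| ≤ C * |x| + C := by
          calc |deriv θ m' * x - deriv κ m'| ≤ |deriv θ m' * x| + |deriv κ m'| := abs_sub _ _
            _ = |deriv θ m'| * |x| + |deriv κ m'| := by rw [abs_mul]
            _ ≤ C * |x| + C := by
                have := abs_nonneg x
                nlinarith
        have h3 : |x| ^ n * |deriv θ m' * x - deriv κ m'| ≤ C * |x| ^ (n+1) + C * |x| ^ n := by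
          have h4 : |x| ^ n * |deriv θ m' * x - deriv κ m'| ≤ |x| ^ n * (C * |x| + C) :=
            mul_le_mul_of_nonneg_left h2 (by positivity)
          calc |x| ^ n * |deriv θ m' * x - deriv κ m'| ≤ |x| ^ n * (C * |x| + C) := h4
            _ = C * |x| ^ (n+1) + C * |x| ^ n := by ring
        have hb1 := hg1b m' hm'Icc x
        have hb0 := hg0b m' hm'Icc x
        have hexppos := (Real.exp_pos (θ m' * x)).le
        have hexpk := (Real.exp_pos (-κ m')).le
        calc (|x| ^ n * |deriv θ m' * x - deriv κ m'|) *
              (Real.exp (-κ m') * Real.exp (θ m' * x))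
            ≤ (C * |x| ^ (n+1) + C * |x| ^ n) * (Real.exp (-κ m') * Real.exp (θ m' * x)) := by
              apply mul_le_mul_of_nonneg_right h3 (by positivity)
          _ = Real.exp (-κ m') * (C * (|x| ^ (n+1) * Real.exp (θ m' * x))
                + C * (|x| ^ n * Real.exp (θ m' * x))) := by ring
          _ ≤ Real.exp (-κ m') * (C * g1 x + C * g0 x) := by
              apply mul_le_mul_of_nonneg_left _ hexpk
              have := mul_le_mul_of_nonneg_left hb1 hCpos.le
              have := mul_le_mul_of_nonneg_left hb0 hCpos.le
              linarith
          _ ≤ C * (C * g1 x + C * g0 x) := by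
              apply mul_le_mul_of_nonneg_right hc3
              have := mul_le_mul_of_nonneg_left (hg1pos x) hCpos.le
              have := mul_le_mul_of_nonneg_left (hg0pos x) hCpos.le
              linarith)
      (((hg1int.const_mul C).add (hg0int.const_mul C)).const_mul C)
      (by
        refine ae_of_all _ fun x => fun m' hm'b => ?_
        have hmM : m' ∈ M := hIccM (hIsub (hball' hm'b))
        have h2 := (hfderiv x m' hmM).const_mul (x ^ n)
        convert h2 using 1
        · rfl
        ring)
    have key2 := key.2
    have hre : (fun x => x ^ n * (deriv θ m * x - deriv κ m) * f x m)
        = fun x => deriv θ m * (x ^ (n+1) * f x m) - deriv κ m * (x ^ n * f x m) :=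
      funext fun x => by ring
    rw [hre, integral_sub ((Mint (n+1) m (hIsub hm)).const_mul _)
      ((Mint n m (hIsub hm)).const_mul _), integral_const_mul, integral_const_mul] at key2
    exact key2
  -- ## κ' = θ'·m  and  θ'·V = 1
  have hκ'rel : ∀ m ∈ Ioo a₁ b₁, deriv κ m = deriv θ m * m := by
    intro m hm
    have h0 := Dmom 0 m hm
    have heq : (fun m' => ∫ x, x ^ 0 * f x m' ∂ν) =ᶠ[nhds m] fun _ => (1:ℝ) :=
      Filter.eventuallyEq_of_mem (hIopen.mem_nhds hm) (fun m' hm' => by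
        simp only [pow_zero, one_mul]; exact hnorm m' (hIM hm'))
    have h1 := h0.congr_of_eventuallyEq heq.symm
    have h2 := h1.unique (hasDerivAt_const m 1)
    have e1 : ∫ x, x ^ 1 * f x m ∂ν = m := by
      simp only [pow_one]; exact hmean m (hIM hm)
    have e0 : ∫ x, x ^ 0 * f x m ∂ν = 1 := by
      simp only [pow_zero, one_mul]; exact hnorm m (hIM hm)
    rw [e1, e0] at h2
    linarith
  have hθ'V : ∀ m ∈ Ioo a₁ b₁, deriv θ m * V m = 1 := by
    intro m hm
    have h1 := Dmom 1 m hm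
    have heq : (fun m' => ∫ x, x ^ 1 * f x m' ∂ν) =ᶠ[nhds m] fun m' => m' :=
      Filter.eventuallyEq_of_mem (hIopen.mem_nhds hm) (fun m' hm' => by
        simp only [pow_one]; exact hmean m' (hIM hm'))
    have h2 := (h1.congr_of_eventuallyEq heq.symm).unique (hasDerivAt_id m)
    have hVm : V m = (∫ x, x ^ 2 * f x m ∂ν) - m ^ 2 := by
      rw [hV m (hIM hm)]
      have hstep : ∫ x, (x - m)^2 * f x m ∂ν
          = ∫ x, ((x ^ 2 * f x m) - (2*m) * (x ^ 1 * f x m)) + m^2 * (x ^ 0 * f x m) ∂ν :=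
        integral_congr_ae (ae_of_all _ fun x => by ring)
      have hi2 : Integrable (fun x => x ^ 2 * f x m) ν := Mint 2 m (hIsub hm)
      have hil : Integrable (fun x => (2*m) * (x ^ 1 * f x m)) ν :=
        (Mint 1 m (hIsub hm)).const_mul _
      have hic : Integrable (fun x => m^2 * (x ^ 0 * f x m)) ν :=
        (Mint 0 m (hIsub hm)).const_mul _
      have hisub : Integrable (fun x => x ^ 2 * f x m - (2*m) * (x ^ 1 * f x m)) ν :=
        hi2.sub hil
      rw [hstep, integral_add hisub hic, integral_sub hi2 hil,
        integral_const_mul, integral_const_mul]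
      have e1 : ∫ x, x ^ 1 * f x m ∂ν = m := by
        simp only [pow_one]; exact hmean m (hIM hm)
      have e0 : ∫ x, x ^ 0 * f x m ∂ν = 1 := by
        simp only [pow_zero, one_mul]; exact hnorm m (hIM hm)
      rw [e1, e0]
      ring
    rw [hκ'rel m hm] at h2
    have e1 : ∫ x, x ^ 1 * f x m ∂ν = m := by
      simp only [pow_one]; exact hmean m (hIM hm)
    rw [e1] at h2
    rw [hVm]
    linear_combination h2
  -- ## Smoothness of the coefficient system
  have hmc_smooth : ∀ k' i, ContDiffOn ℝ ⊤ (mc θ κ k' i) M := by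
    intro k'
    induction k' with
    | zero =>
        intro i
        match i with
        | 0 => exact contDiffOn_const
        | (i+1) => exact contDiffOn_const
    | succ k' ih =>
        intro i
        match i with
        | 0 =>
            have h1 : ContDiffOn ℝ ⊤ (deriv (mc θ κ k' 0)) M :=
              (ih 0).deriv_of_isOpen hM le_top
            have h2 : ContDiffOn ℝ ⊤ (deriv κ) M := hκ.deriv_of_isOpen hM le_top
            exact h1.sub (h2.mul (ih 0))
        | (i+1) =>
            have h1 : ContDiffOn ℝ ⊤ (deriv (mc θ κ k' (i+1))) M :=
              (ih (i+1)).deriv_of_isOpen hM le_top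
            have h2 : ContDiffOn ℝ ⊤ (deriv κ) M := hκ.deriv_of_isOpen hM le_top
            have h3 : ContDiffOn ℝ ⊤ (deriv θ) M := hθ.deriv_of_isOpen hM le_top
            exact (h1.add (h3.mul (ih i))).sub (h2.mul (ih (i+1)))
  have hmc_diff : ∀ k' i, ∀ m ∈ M, DifferentiableAt ℝ (mc θ κ k' i) m :=
    fun k' i m hm => ((hmc_smooth k' i).differentiableOn (by simp)).differentiableAt
      (hM.mem_nhds hm)
  -- ## Representation of iterated derivatives of f
  have hrep : ∀ k' (x : ℝ), ∀ m ∈ M, iteratedDeriv k' (fun m' => f x m') m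
      = (∑ i ∈ Finset.range (k' + 1), mc θ κ k' i m * x ^ i) * f x m := by
    intro k'
    induction k' with
    | zero =>
        intro x m hm
        simp [iteratedDeriv_zero, Finset.sum_range_one, mc_zero_zero]
    | succ k' ih =>
        intro x m hm
        rw [show k' + 1 + 1 = k' + 2 from rfl, iteratedDeriv_succ]
        have heq : iteratedDeriv k' (fun m' => f x m') =ᶠ[nhds m]
            fun m' => (∑ i ∈ Finset.range (k' + 1), mc θ κ k' i m' * x ^ i) * f x m' :=
          Filter.eventuallyEq_of_mem (hM.mem_nhds hm) (fun m' hm' => ih x m' hm')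
        rw [heq.deriv_eq]
        have hS : HasDerivAt (fun m' => ∑ i ∈ Finset.range (k' + 1), mc θ κ k' i m' * x ^ i)
            (∑ i ∈ Finset.range (k' + 1), deriv (mc θ κ k' i) m * x ^ i) m :=
          HasDerivAt.fun_sum fun i _ => ((hmc_diff k' i m hm).hasDerivAt).mul_const _
        rw [(hS.fun_mul (hfderiv x m hm)).deriv]
        have hck : mc θ κ k' (k' + 1) m = 0 := by
          simp [mc_zero_of_lt θ κ k' (k'+1) (Nat.lt_succ_self k')]
        have hdk : deriv (mc θ κ k' (k' + 1)) m = 0 := by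
          rw [mc_zero_of_lt θ κ k' (k'+1) (Nat.lt_succ_self k')]
          simp
        have hsum : ∑ i ∈ Finset.range (k' + 2), mc θ κ (k'+1) i m * x ^ i
            = ∑ i ∈ Finset.range (k' + 1), deriv (mc θ κ k' i) m * x ^ i
              + deriv θ m * ∑ i ∈ Finset.range (k' + 1), mc θ κ k' i m * x ^ (i + 1)
              - deriv κ m * ∑ i ∈ Finset.range (k' + 1), mc θ κ k' i m * x ^ i :=
          sum_step (fun i => deriv (mc θ κ k' i) m) (fun i => mc θ κ k' i m)
            (fun i => mc θ κ (k'+1) i m) (fun i => x ^ i) (deriv θ m) (deriv κ m) k'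
            hck hdk (mc_succ_zero θ κ k' m) (fun i => mc_succ_succ θ κ k' i m)
        have hx : ∑ i ∈ Finset.range (k' + 1), mc θ κ k' i m * x ^ (i + 1)
            = x * ∑ i ∈ Finset.range (k' + 1), mc θ κ k' i m * x ^ i := by
          rw [Finset.mul_sum]
          exact Finset.sum_congr rfl fun i _ => by ring
        rw [hsum, hx]
        ring
  -- ## Representation of iterated derivatives of the moment functions
  have hmomrep : ∀ k' n, ∀ m ∈ Ioo a₁ b₁,
      iteratedDeriv k' (fun m' => ∫ x, x ^ n * f x m' ∂ν) m
        = ∑ i ∈ Finset.range (k' + 1), mc θ κ k' i m * ∫ x, x ^ (n + i) * f x m ∂ν := by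
    intro k'
    induction k' with
    | zero =>
        intro n m hm
        simp [mc_zero_zero]
    | succ k' ih =>
        intro n m hm
        rw [show k' + 1 + 1 = k' + 2 from rfl, iteratedDeriv_succ]
        have heq : iteratedDeriv k' (fun m' => ∫ x, x ^ n * f x m' ∂ν) =ᶠ[nhds m]
            fun m'' => ∑ i ∈ Finset.range (k' + 1),
              mc θ κ k' i m'' * ∫ x, x ^ (n + i) * f x m'' ∂ν :=
          Filter.eventuallyEq_of_mem (hIopen.mem_nhds hm) (fun m' hm' => ih n m' hm')
        rw [heq.deriv_eq]
        have hterm : ∀ i ∈ Finset.range (k' + 1),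
            HasDerivAt (fun m'' => mc θ κ k' i m'' * ∫ x, x ^ (n + i) * f x m'' ∂ν)
              (deriv (mc θ κ k' i) m * (∫ x, x ^ (n + i) * f x m ∂ν)
                + mc θ κ k' i m * (deriv θ m * (∫ x, x ^ (n + i + 1) * f x m ∂ν)
                    - deriv κ m * (∫ x, x ^ (n + i) * f x m ∂ν))) m :=
          fun i _ => ((hmc_diff k' i m (hIM hm)).hasDerivAt).mul (Dmom (n + i) m hm)
        rw [(HasDerivAt.fun_sum hterm).deriv]
        have hck : mc θ κ k' (k' + 1) m = 0 := by
          simp [mc_zero_of_lt θ κ k' (k'+1) (Nat.lt_succ_self k')]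
        have hdk : deriv (mc θ κ k' (k' + 1)) m = 0 := by
          rw [mc_zero_of_lt θ κ k' (k'+1) (Nat.lt_succ_self k')]
          simp
        have hsum : ∑ i ∈ Finset.range (k' + 2), mc θ κ (k'+1) i m * ∫ x, x ^ (n + i) * f x m ∂ν
            = ∑ i ∈ Finset.range (k' + 1), deriv (mc θ κ k' i) m * ∫ x, x ^ (n + i) * f x m ∂ν
              + deriv θ m * ∑ i ∈ Finset.range (k' + 1),
                  mc θ κ k' i m * ∫ x, x ^ (n + i + 1) * f x m ∂ν
              - deriv κ m * ∑ i ∈ Finset.range (k' + 1),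
                  mc θ κ k' i m * ∫ x, x ^ (n + i) * f x m ∂ν :=
          sum_step (fun i => deriv (mc θ κ k' i) m) (fun i => mc θ κ k' i m)
            (fun i => mc θ κ (k'+1) i m) (fun i => ∫ x, x ^ (n + i) * f x m ∂ν)
            (deriv θ m) (deriv κ m) k' hck hdk (mc_succ_zero θ κ k' m)
            (fun i => mc_succ_succ θ κ k' i m)
        rw [hsum]
        have hfinal : ∀ i ∈ Finset.range (k' + 1),
            deriv (mc θ κ k' i) m * (∫ x, x ^ (n + i) * f x m ∂ν)
              + mc θ κ k' i m * (deriv θ m * (∫ x, x ^ (n + i + 1) * f x m ∂ν)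
                  - deriv κ m * (∫ x, x ^ (n + i) * f x m ∂ν))
            = deriv (mc θ κ k' i) m * (∫ x, x ^ (n + i) * f x m ∂ν)
              + deriv θ m * (mc θ κ k' i m * (∫ x, x ^ (n + i + 1) * f x m ∂ν))
              - deriv κ m * (mc θ κ k' i m * (∫ x, x ^ (n + i) * f x m ∂ν)) :=
          fun i _ => by ring
        rw [Finset.sum_congr rfl hfinal, Finset.sum_sub_distrib, Finset.sum_add_distrib,
          ← Finset.mul_sum, ← Finset.mul_sum]
  -- ## Moments are polynomials on the interval
  have hpoly : ∀ n : ℕ, ∃ p : Polynomial ℝ, p.natDegree ≤ n ∧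
      ∀ m ∈ Ioo a₁ b₁, (∫ x, x ^ n * f x m ∂ν) = p.eval m := by
    obtain ⟨qa, qb, qc, hquadeq⟩ := hquad
    intro n
    induction n with
    | zero =>
        refine ⟨1, by simp, fun m hm => ?_⟩
        simp only [pow_zero, one_mul, Polynomial.eval_one]
        exact hnorm m (hIM hm)
    | succ n ih =>
        obtain ⟨p, hdeg, hp⟩ := ih
        refine ⟨Polynomial.X * p + (Polynomial.C qa * Polynomial.X ^ 2
          + Polynomial.C qb * Polynomial.X + Polynomial.C qc) * Polynomial.derivative p, ?_, ?_⟩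
        · apply le_trans (Polynomial.natDegree_add_le _ _)
          apply max_le
          · have h1 := Polynomial.natDegree_mul_le (p := (Polynomial.X : Polynomial ℝ)) (q := p)
            have h2 := Polynomial.natDegree_X_le (R := ℝ)
            omega
          · rcases Nat.eq_zero_or_pos p.natDegree with h0 | h0
            · have hder : Polynomial.derivative p = 0 := by
                rw [Polynomial.eq_C_of_natDegree_eq_zero h0]
                simp
              rw [hder, mul_zero]
              simp
            · have h1 := Polynomial.natDegree_mul_le
                (p := (Polynomial.C qa * Polynomial.X ^ 2
                  + Polynomial.C qb * Polynomial.X + Polynomial.C qc)) (q := Polynomial.derivative p)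
              have h2 : (Polynomial.C qa * Polynomial.X ^ 2
                  + Polynomial.C qb * Polynomial.X + Polynomial.C qc).natDegree ≤ 2 :=
                Polynomial.natDegree_quadratic_le
              have h3 := Polynomial.natDegree_derivative_le p
              omega
        · intro m hm
          have hev : (fun m' => ∫ x, x ^ n * f x m' ∂ν) =ᶠ[nhds m] fun m' => p.eval m' :=
            Filter.eventuallyEq_of_mem (hIopen.mem_nhds hm) (fun m' hm' => hp m' hm')
          have hpd := (Dmom n m hm).congr_of_eventuallyEq hev.symm
          have huniq := hpd.unique (Polynomial.hasDerivAt p m)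
          have hVq := hθ'V m hm
          have hκm := hκ'rel m hm
          have hVquad := hquadeq m (hIM hm)
          have hMn := hp m hm
          simp only [Polynomial.eval_add, Polynomial.eval_mul, Polynomial.eval_pow,
            Polynomial.eval_X, Polynomial.eval_C]
          rw [← hVquad, ← hMn]
          linear_combination (V m) * huniq
            + (m * (∫ x, x ^ n * f x m ∂ν) - (∫ x, x ^ (n+1) * f x m ∂ν)) * hVq
            + (V m) * (∫ x, x ^ n * f x m ∂ν) * hκm
  -- ## Vanishing of high iterated derivatives of low moments
  have hvanish : ∀ n k' : ℕ, n < k' →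
      iteratedDeriv k' (fun m' => ∫ x, x ^ n * f x m' ∂ν) μ = 0 := by
    intro n k' hnk
    obtain ⟨p, hdeg, hp⟩ := hpoly n
    have hEq : Set.EqOn (fun m' => ∫ x, x ^ n * f x m' ∂ν) (fun m' => p.eval m') (Ioo a₁ b₁) :=
      fun m' hm' => hp m' hm'
    rw [eqOn_iteratedDeriv hIopen hEq k' hμI, iteratedDeriv_polynomial,
      Polynomial.iterate_derivative_eq_zero (lt_of_le_of_lt hdeg hnk)]
    simp
  -- ## Core orthogonality (ordered case)
  have core : ∀ k' j' : ℕ, j' < k' →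
      ∫ x, ((V μ)^k' * iteratedDerivWithin k' (fun m => f x m) M μ / f x μ)
          * ((V μ)^j' * iteratedDerivWithin j' (fun m => f x m) M μ / f x μ) * f x μ ∂ν = 0 := by
    intro k' j' hjk
    have hfe : ∀ l : ℕ, (fun x => x ^ l *
          ((∑ i ∈ Finset.range (k' + 1), mc θ κ k' i μ * x ^ i) * f x μ))
        = fun x => ∑ i ∈ Finset.range (k' + 1), mc θ κ k' i μ * (x ^ (l + i) * f x μ) := by
      intro l; funext x
      rw [Finset.sum_mul, Finset.mul_sum]
      exact Finset.sum_congr rfl fun i _ => by ring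
    have hint : ∀ l : ℕ, Integrable (fun x => x ^ l *
        ((∑ i ∈ Finset.range (k' + 1), mc θ κ k' i μ * x ^ i) * f x μ)) ν := by
      intro l
      rw [hfe l]
      exact integrable_finset_sum _ fun i _ => (Mint (l + i) μ hμIcc).const_mul _
    have hinner : ∀ l : ℕ, ∫ x, x ^ l *
          ((∑ i ∈ Finset.range (k' + 1), mc θ κ k' i μ * x ^ i) * f x μ) ∂ν
        = ∑ i ∈ Finset.range (k' + 1), mc θ κ k' i μ * ∫ x, x ^ (l + i) * f x μ ∂ν := by
      intro l
      rw [hfe l, integral_finset_sum _ fun i _ => (Mint (l + i) μ hμIcc).const_mul _]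
      exact Finset.sum_congr rfl fun i _ => integral_const_mul _ _
    have hzero : ∀ l : ℕ, l ≤ j' → ∫ x, x ^ l *
        ((∑ i ∈ Finset.range (k' + 1), mc θ κ k' i μ * x ^ i) * f x μ) ∂ν = 0 := by
      intro l hl
      rw [hinner l, ← hmomrep k' l μ hμI]
      exact hvanish l k' (lt_of_le_of_lt hl hjk)
    have hrw : ∀ x, ((V μ)^k' * iteratedDerivWithin k' (fun m => f x m) M μ / f x μ)
        * ((V μ)^j' * iteratedDerivWithin j' (fun m => f x m) M μ / f x μ) * f x μ
        = ((V μ)^k' * (V μ)^j') * ∑ l ∈ Finset.range (j' + 1), mc θ κ j' l μ *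
            (x ^ l * ((∑ i ∈ Finset.range (k' + 1), mc θ κ k' i μ * x ^ i) * f x μ)) := by
      intro x
      rw [iteratedDerivWithin_of_isOpen' k' hM hμ, iteratedDerivWithin_of_isOpen' j' hM hμ,
        hrep k' x μ hμ, hrep j' x μ hμ]
      have hfold : ∑ l ∈ Finset.range (j' + 1), mc θ κ j' l μ *
            (x ^ l * ((∑ i ∈ Finset.range (k' + 1), mc θ κ k' i μ * x ^ i) * f x μ))
          = (∑ l ∈ Finset.range (j' + 1), mc θ κ j' l μ * x ^ l) *
            ((∑ i ∈ Finset.range (k' + 1), mc θ κ k' i μ * x ^ i) * f x μ) := by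
        rw [Finset.sum_mul (s := Finset.range (j' + 1))
          (f := fun l => mc θ κ j' l μ * x ^ l)]
        exact Finset.sum_congr rfl fun l _ => by ring
      rw [hfold]
      have hne := (fpos x μ).ne'
      field_simp
    rw [integral_congr_ae (ae_of_all _ hrw), integral_const_mul,
      integral_finset_sum _ (fun l _ => (hint l).const_mul _)]
    have hsz : ∑ l ∈ Finset.range (j' + 1), ∫ x, mc θ κ j' l μ *
        (x ^ l * ((∑ i ∈ Finset.range (k' + 1), mc θ κ k' i μ * x ^ i) * f x μ)) ∂ν = 0 :=
      Finset.sum_eq_zero fun l hl => by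
        rw [integral_const_mul, hzero l (Nat.lt_succ_iff.mp (Finset.mem_range.mp hl)), mul_zero]
    rw [hsz, mul_zero]
  -- ## Conclusion
  rcases lt_or_gt_of_ne hkj with hlt | hgt
  · calc ∫ x, ((V μ)^k * iteratedDerivWithin k (fun m => f x m) M μ / f x μ)
          * ((V μ)^j * iteratedDerivWithin j (fun m => f x m) M μ / f x μ) * f x μ ∂ν
        = ∫ x, ((V μ)^j * iteratedDerivWithin j (fun m => f x m) M μ / f x μ)
          * ((V μ)^k * iteratedDerivWithin k (fun m => f x m) M μ / f x μ) * f x μ ∂ν :=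
          integral_congr_ae (ae_of_all _ fun x => by ring)
      _ = 0 := core j k hlt
  · exact core k j hgt
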